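/- Let f: X → ℝ be bounded measurable and m a probability measure on X. Then the value at risk p-esssup_{x'∼m} f(x') := inf{ t ∈ ℝ : m({f > t}) ≤ p } is at most CVaR_p(f; m) := inf_{α∈ℝ} ( α + E_{x'∼m}[(f(x')−α)_+]/p ), for any p ∈ (0,1). -/
import Mathlib


open MeasureTheory

theorem stmt13 {X : Type*} [MeasurableSpace X]
    (m : Measure X) [IsProbabilityMeasure m]
    (f : X → ℝ) (hf : Measurable f) (C : ℝ) (hbd : ∀ x, |f x| ≤ C)
    (p : ℝ) (hp0 : 0 < p) (hp1 : p < 1) :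
    sInf {t : ℝ | (m {x | t < f x}).toReal ≤ p}
      ≤ ⨅ α : ℝ, α + (∫ x, max (f x - α) 0 ∂m) / p := by
  have hbdd : BddBelow {t : ℝ | (m {x | t < f x}).toReal ≤ p} := by
    refine ⟨-C, fun t ht => ?_⟩
    by_contra h
    push_neg at h
    simp only [Set.mem_setOf_eq] at ht
    have huniv : {x | t < f x} = Set.univ := by
      ext x
      simp only [Set.mem_setOf_eq, Set.mem_univ, iff_true]
      have := (abs_le.mp (hbd x)).1
      linarith
    rw [huniv, measure_univ] at ht
    simp at ht
    linarith
  apply le_ciInf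
  intro α
  have hgmeas : Measurable (fun x => max (f x - α) 0) :=
    (hf.sub measurable_const).max measurable_const
  have hgint : Integrable (fun x => max (f x - α) 0) m := by
    refine (integrable_const (C + |α|)).mono' hgmeas.aestronglyMeasurable
      (Filter.Eventually.of_forall fun x => ?_)
    have h1 := (abs_le.mp (hbd x)).2
    have h2 : -|α| ≤ α := neg_abs_le α
    have h3 : 0 ≤ C := le_trans (abs_nonneg _) (hbd x)
    simp only [Real.norm_eq_abs]
    rw [abs_of_nonneg (le_max_right _ _)]
    apply max_le <;> [linarith; positivity]
  obtain ⟨E, hE⟩ : ∃ E, E = ∫ x, max (f x - α) 0 ∂m := ⟨_, rfl⟩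
  rw [← hE]
  have hEnn : 0 ≤ E := hE ▸ integral_nonneg fun x => le_max_right _ _
  have hdiv : 0 ≤ E / p := div_nonneg hEnn hp0.le
  suffices hmem : (m {x | α + E / p < f x}).toReal ≤ p from csInf_le hbdd hmem
  rcases eq_or_lt_of_le hEnn with hE0 | hEpos
  · -- E = 0: integrand is 0 a.e.
    have hae : ∀ᵐ x ∂m, max (f x - α) 0 = 0 := by
      have := (integral_eq_zero_iff_of_nonneg
        (fun x => le_max_right (f x - α) 0) hgint).mp (hE ▸ hE0.symm)
      filter_upwards [this] with x hx using hx
    have hnull : m {x | ¬ max (f x - α) 0 = 0} = 0 := ae_iff.mp hae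
    have hsub : {x | α + E / p < f x} ⊆ {x | ¬ max (f x - α) 0 = 0} := by
      intro x hx
      simp only [Set.mem_setOf_eq] at hx ⊢
      have h0 : 0 < f x - α := by linarith
      rw [max_eq_left h0.le]
      exact ne_of_gt h0
    rw [measure_mono_null hsub hnull]
    simp [hp0.le]
  · -- Markov
    have hsmeas : MeasurableSet {x | α + E / p < f x} :=
      measurableSet_lt measurable_const hf
    have hmarkov : (m {x | α + E / p < f x}).toReal * (E / p) ≤ E := by
      have hle : ∀ x, Set.indicator {x | α + E / p < f x} (fun _ => E / p) x
          ≤ max (f x - α) 0 := by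
        intro x
        by_cases hx : x ∈ {x | α + E / p < f x}
        · rw [Set.indicator_of_mem hx]
          simp only [Set.mem_setOf_eq] at hx
          exact le_max_of_le_left (by linarith)
        · rw [Set.indicator_of_notMem hx]
          exact le_max_right _ _
      have hind : Integrable (Set.indicator {x | α + E / p < f x} fun _ => E / p) m :=
        (integrable_const _).indicator hsmeas
      have := integral_mono hind hgint hle
      rwa [integral_indicator_const _ hsmeas, smul_eq_mul, ← hE] at this
    have h2 : (m {x | α + E / p < f x}).toReal * E ≤ p * E := by
      have h3 : (m {x | α + E / p < f x}).toReal * E / p ≤ E := by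
        rw [mul_div_assoc] at *; exact hmarkov
      have := (div_le_iff₀ hp0).mp h3
      linarith
    exact le_of_mul_le_mul_right h2 hEpos
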